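/- Let V be a vector space over ℚ, let Π ⊆ V be a finite linearly independent subset, let π ⊆ V be a finite subset, and let b, b′ : π → Π be maps such that α = b(α) + b′(α) for every α ∈ π, b is injective, and b(π) ∩ b′(π) = ∅. Then every vector of V that lies in the ℚ-linear span of π and is a ℚ≥0-linear combination of elements of Π is a ℚ≥0-linear combination of elements of π. -/

import Mathlib

/-- abstract form of (QpiPi) in §6.4.1. -/
theorem stmt_9 {V : Type*} [AddCommGroup V] [Module ℚ V]
    (Pi pi : Finset V)
    (hind : LinearIndependent ℚ (Subtype.val : {v : V // v ∈ Pi} → V))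
    (b b' : V → V)
    (hb : ∀ α ∈ pi, b α ∈ Pi) (hb' : ∀ α ∈ pi, b' α ∈ Pi)
    (hsum : ∀ α ∈ pi, α = b α + b' α)
    (hinj : Set.InjOn b ↑pi)
    (hdisj : ∀ α ∈ pi, ∀ α' ∈ pi, b α ≠ b' α') :
    ∀ v : V, v ∈ Submodule.span ℚ (pi : Set V) →
      (∃ c : V → ℚ, (∀ x ∈ Pi, 0 ≤ c x) ∧ v = ∑ x ∈ Pi, c x • x) →
      ∃ c : V → ℚ, (∀ x ∈ pi, 0 ≤ c x) ∧ v = ∑ x ∈ pi, c x • x := by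
  classical
  rintro v hv ⟨c, hc0, hcv⟩
  rw [Submodule.mem_span_finset] at hv
  obtain ⟨d, -, hd⟩ := hv
  refine ⟨d, ?_, hd.symm⟩
  intro α hα
  -- the expansion of v over Pi obtained from d
  set e : V → ℚ := fun x =>
    ∑ β ∈ pi, ((if b β = x then d β else 0) + (if b' β = x then d β else 0)) with he
  have hev : ∑ x ∈ Pi, e x • x = v := by
    have : ∑ x ∈ Pi, e x • x
        = ∑ β ∈ pi, ((∑ x ∈ Pi, (if b β = x then d β • x else 0))
            + (∑ x ∈ Pi, (if b' β = x then d β • x else 0))) := by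
      simp only [he, Finset.sum_smul, add_smul, ite_smul, zero_smul,
        Finset.sum_add_distrib]
      rw [Finset.sum_comm, Finset.sum_comm (s := Pi)]
    rw [this]
    have : ∀ β ∈ pi,
        ((∑ x ∈ Pi, (if b β = x then d β • x else 0))
          + (∑ x ∈ Pi, (if b' β = x then d β • x else 0))) = d β • β := by
      intro β hβ
      rw [Finset.sum_ite_eq Pi (b β) (fun x => d β • x),
        Finset.sum_ite_eq Pi (b' β) (fun x => d β • x),
        if_pos (hb β hβ), if_pos (hb' β hβ), ← smul_add, ← hsum β hβ]
    rw [Finset.sum_congr rfl this, hd]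
  -- compare coefficients using linear independence
  have hkey : ∀ x ∈ Pi, c x = e x := by
    have h0 : ∑ x ∈ Pi.attach, (c x.1 - e x.1) • (x.1 : V) = 0 := by
      have := Finset.sum_attach Pi (fun x => (c x - e x) • x)
      rw [this]
      simp only [sub_smul, Finset.sum_sub_distrib, hev, ← hcv, sub_self]
    have := Fintype.linearIndependent_iff.mp hind (fun x => c x.1 - e x.1)
      (by simpa using h0)
    intro x hx
    have hz := this ⟨x, hx⟩
    simp only [] at hz
    linarith
  -- evaluate at b α
  have hce : c (b α) = e (b α) := hkey (b α) (hb α hα)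
  have he1 : e (b α) = d α := by
    simp only [he]
    have : ∀ β ∈ pi,
        ((if b β = b α then d β else 0) + (if b' β = b α then d β else 0))
          = (if β = α then d β else 0) := by
      intro β hβ
      have h2 : (if b' β = b α then d β else 0) = 0 :=
        if_neg (fun h => hdisj α hα β hβ h.symm)
      have h1 : (if b β = b α then d β else 0) = (if β = α then d β else 0) := by
        by_cases h : β = α
        · subst h; simp
        · rw [if_neg (fun hb => h (hinj hβ hα hb)), if_neg h]
      rw [h1, h2, add_zero]
    rw [Finset.sum_congr rfl this, Finset.sum_ite_eq' pi α d, if_pos hα]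
  have := hc0 (b α) (hb α hα)
  rw [hce, he1] at this
  exact this
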